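/- Commuting long- and short-root matrices: let 1 ≤ i, j, k ≤ n and signs a, b, c ∈ {+1,−1} satisfy i ≠ j, −ck ≠ ai, and −ck ≠ bj. Then for all t, u ∈ F, one has L^{a,b}_{i,j}(t) · S^c_k(u) · L^{a,b}_{i,j}(−t) · S^c_k(−u) = I; equivalently, L^{a,b}_{i,j}(t) and S^c_k(u) commute. -/

import Mathlib

open Matrix

/-- Index set `{-n, …, n}` for (2n+1)×(2n+1) matrices. -/
abbrev BIdx (n : ℕ) : Type := {z : ℤ // z ∈ Finset.Icc (-(n : ℤ)) (n : ℤ)}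

/-- `Eb F n p q` : the matrix with a 1 in entry (p,q) and 0 elsewhere
(rows and columns indexed by `{-n, …, n}`). -/
def Eb (F : Type*) [Field F] (n : ℕ) (p q : ℤ) : Matrix (BIdx n) (BIdx n) F :=
  Matrix.of fun r c => if ((r : ℤ) = p ∧ (c : ℤ) = q) then 1 else 0

/-- Short-root matrix `S^a_i(t) := I + 2at·E_{ai,0} − at·E_{0,−ai} − t²·E_{ai,−ai}`. -/
def Sb (F : Type*) [Field F] (n : ℕ) (a i : ℤ) (t : F) : Matrix (BIdx n) (BIdx n) F :=
  1 + (2 * (a : F) * t) • Eb F n (a * i) 0 - ((a : F) * t) • Eb F n 0 (-(a * i))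
    - t ^ 2 • Eb F n (a * i) (-(a * i))

/-- Long-root matrix `L^{a,b}_{i,j}(t) := I + at·E_{ai,−bj} − at·E_{bj,−ai}`. -/
def Lb (F : Type*) [Field F] (n : ℕ) (a b i j : ℤ) (t : F) : Matrix (BIdx n) (BIdx n) F :=
  1 + ((a : F) * t) • Eb F n (a * i) (-(b * j)) - ((a : F) * t) • Eb F n (b * j) (-(a * i))

lemma Eb_eq_std (F : Type*) [Field F] (n : ℕ) (p q : ℤ)
    (hp : p ∈ Finset.Icc (-(n : ℤ)) (n : ℤ)) (hq : q ∈ Finset.Icc (-(n : ℤ)) (n : ℤ)) :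
    Eb F n p q = Matrix.single (⟨p, hp⟩ : BIdx n) (⟨q, hq⟩ : BIdx n) (1 : F) := by
  ext r c
  simp [Eb, Matrix.single, Subtype.ext_iff, eq_comm, and_comm]

/-- Commuting long- and short-root matrices: for `i ≠ j`, `−ck ≠ ai`, `−ck ≠ bj`,
`L^{a,b}_{i,j}(t) · S^c_k(u) · L^{a,b}_{i,j}(−t) · S^c_k(−u) = I`;
equivalently, `L^{a,b}_{i,j}(t)` and `S^c_k(u)` commute. -/
theorem typeB_long_short_commute (F : Type*) [Field F] (n : ℕ) (hn : 1 ≤ n)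
    (a b c : ℤ) (ha : a = 1 ∨ a = -1) (hb : b = 1 ∨ b = -1) (hc : c = 1 ∨ c = -1)
    (i j k : ℤ) (hi1 : 1 ≤ i) (hin : i ≤ (n : ℤ)) (hj1 : 1 ≤ j) (hjn : j ≤ (n : ℤ))
    (hk1 : 1 ≤ k) (hkn : k ≤ (n : ℤ))
    (hij : i ≠ j) (hka : -(c * k) ≠ a * i) (hkb : -(c * k) ≠ b * j)
    (t u : F) :
    Lb F n a b i j t * Sb F n c k u * Lb F n a b i j (-t) * Sb F n c k (-u) = 1 ∧
    Lb F n a b i j t * Sb F n c k u = Sb F n c k u * Lb F n a b i j t := by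
  have hP : a * i = i ∨ a * i = -i := by rcases ha with rfl | rfl <;> simp
  have hQ : b * j = j ∨ b * j = -j := by rcases hb with rfl | rfl <;> simp
  have hR : c * k = k ∨ c * k = -k := by rcases hc with rfl | rfl <;> simp
  have hPm : a * i ∈ Finset.Icc (-(n : ℤ)) (n : ℤ) := by rw [Finset.mem_Icc]; omega
  have hPm' : -(a * i) ∈ Finset.Icc (-(n : ℤ)) (n : ℤ) := by rw [Finset.mem_Icc]; omega
  have hQm : b * j ∈ Finset.Icc (-(n : ℤ)) (n : ℤ) := by rw [Finset.mem_Icc]; omega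
  have hQm' : -(b * j) ∈ Finset.Icc (-(n : ℤ)) (n : ℤ) := by rw [Finset.mem_Icc]; omega
  have hRm : c * k ∈ Finset.Icc (-(n : ℤ)) (n : ℤ) := by rw [Finset.mem_Icc]; omega
  have hRm' : -(c * k) ∈ Finset.Icc (-(n : ℤ)) (n : ℤ) := by rw [Finset.mem_Icc]; omega
  have h0m : (0 : ℤ) ∈ Finset.Icc (-(n : ℤ)) (n : ℤ) := by rw [Finset.mem_Icc]; omega
  set A := Matrix.single (⟨a * i, hPm⟩ : BIdx n) (⟨-(b * j), hQm'⟩ : BIdx n) (1 : F) with hA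
  set B := Matrix.single (⟨b * j, hQm⟩ : BIdx n) (⟨-(a * i), hPm'⟩ : BIdx n) (1 : F) with hB
  set C := Matrix.single (⟨c * k, hRm⟩ : BIdx n) (⟨(0 : ℤ), h0m⟩ : BIdx n) (1 : F) with hC
  set D := Matrix.single (⟨(0 : ℤ), h0m⟩ : BIdx n) (⟨-(c * k), hRm'⟩ : BIdx n) (1 : F) with hD
  set E := Matrix.single (⟨c * k, hRm⟩ : BIdx n) (⟨-(c * k), hRm'⟩ : BIdx n) (1 : F) with hE
  have hL : ∀ s : F, Lb F n a b i j s = 1 + ((a : F) * s) • A - ((a : F) * s) • B := by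
    intro s
    rw [Lb, Eb_eq_std F n _ _ hPm hQm', Eb_eq_std F n _ _ hQm hPm']
  have hS : ∀ v : F, Sb F n c k v
      = 1 + (2 * (c : F) * v) • C - ((c : F) * v) • D - v ^ 2 • E := by
    intro v
    rw [Sb, Eb_eq_std F n _ _ hRm h0m, Eb_eq_std F n _ _ h0m hRm',
      Eb_eq_std F n _ _ hRm hRm']
  have ne1 : (⟨-(b * j), hQm'⟩ : BIdx n) ≠ ⟨c * k, hRm⟩ := by
    simp only [ne_eq, Subtype.mk.injEq]; omega
  have ne2 : (⟨-(b * j), hQm'⟩ : BIdx n) ≠ ⟨(0 : ℤ), h0m⟩ := by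
    simp only [ne_eq, Subtype.mk.injEq]; omega
  have ne3 : (⟨-(a * i), hPm'⟩ : BIdx n) ≠ ⟨c * k, hRm⟩ := by
    simp only [ne_eq, Subtype.mk.injEq]; omega
  have ne4 : (⟨-(a * i), hPm'⟩ : BIdx n) ≠ ⟨(0 : ℤ), h0m⟩ := by
    simp only [ne_eq, Subtype.mk.injEq]; omega
  have ne5 : (⟨(0 : ℤ), h0m⟩ : BIdx n) ≠ ⟨a * i, hPm⟩ := by
    simp only [ne_eq, Subtype.mk.injEq]; omega
  have ne6 : (⟨(0 : ℤ), h0m⟩ : BIdx n) ≠ ⟨b * j, hQm⟩ := by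
    simp only [ne_eq, Subtype.mk.injEq]; omega
  have ne7 : (⟨-(c * k), hRm'⟩ : BIdx n) ≠ ⟨a * i, hPm⟩ := by
    simp only [ne_eq, Subtype.mk.injEq]; omega
  have ne8 : (⟨-(c * k), hRm'⟩ : BIdx n) ≠ ⟨b * j, hQm⟩ := by
    simp only [ne_eq, Subtype.mk.injEq]; omega
  have ne9 : (⟨-(b * j), hQm'⟩ : BIdx n) ≠ ⟨a * i, hPm⟩ := by
    simp only [ne_eq, Subtype.mk.injEq]; omega
  have ne10 : (⟨-(b * j), hQm'⟩ : BIdx n) ≠ ⟨b * j, hQm⟩ := by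
    simp only [ne_eq, Subtype.mk.injEq]; omega
  have ne11 : (⟨-(a * i), hPm'⟩ : BIdx n) ≠ ⟨a * i, hPm⟩ := by
    simp only [ne_eq, Subtype.mk.injEq]; omega
  have ne12 : (⟨-(a * i), hPm'⟩ : BIdx n) ≠ ⟨b * j, hQm⟩ := by
    simp only [ne_eq, Subtype.mk.injEq]; omega
  have ne13 : (⟨(0 : ℤ), h0m⟩ : BIdx n) ≠ ⟨c * k, hRm⟩ := by
    simp only [ne_eq, Subtype.mk.injEq]; omega
  have ne14 : (⟨-(c * k), hRm'⟩ : BIdx n) ≠ ⟨c * k, hRm⟩ := by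
    simp only [ne_eq, Subtype.mk.injEq]; omega
  have ne15 : (⟨-(c * k), hRm'⟩ : BIdx n) ≠ ⟨(0 : ℤ), h0m⟩ := by
    simp only [ne_eq, Subtype.mk.injEq]; omega
  have hAC : A * C = 0 := Matrix.single_mul_single_of_ne _ _ _ _ ne1 _
  have hAD : A * D = 0 := Matrix.single_mul_single_of_ne _ _ _ _ ne2 _
  have hAE : A * E = 0 := Matrix.single_mul_single_of_ne _ _ _ _ ne1 _
  have hBC : B * C = 0 := Matrix.single_mul_single_of_ne _ _ _ _ ne3 _
  have hBD : B * D = 0 := Matrix.single_mul_single_of_ne _ _ _ _ ne4 _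
  have hBE : B * E = 0 := Matrix.single_mul_single_of_ne _ _ _ _ ne3 _
  have hCA : C * A = 0 := Matrix.single_mul_single_of_ne _ _ _ _ ne5 _
  have hCB : C * B = 0 := Matrix.single_mul_single_of_ne _ _ _ _ ne6 _
  have hDA : D * A = 0 := Matrix.single_mul_single_of_ne _ _ _ _ ne7 _
  have hDB : D * B = 0 := Matrix.single_mul_single_of_ne _ _ _ _ ne8 _
  have hEA : E * A = 0 := Matrix.single_mul_single_of_ne _ _ _ _ ne7 _
  have hEB : E * B = 0 := Matrix.single_mul_single_of_ne _ _ _ _ ne8 _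
  have hAA : A * A = 0 := Matrix.single_mul_single_of_ne _ _ _ _ ne9 _
  have hABz : A * B = 0 := Matrix.single_mul_single_of_ne _ _ _ _ ne10 _
  have hBA : B * A = 0 := Matrix.single_mul_single_of_ne _ _ _ _ ne11 _
  have hBB : B * B = 0 := Matrix.single_mul_single_of_ne _ _ _ _ ne12 _
  have hCC : C * C = 0 := Matrix.single_mul_single_of_ne _ _ _ _ ne13 _
  have hCE : C * E = 0 := Matrix.single_mul_single_of_ne _ _ _ _ ne13 _
  have hDC : D * C = 0 := Matrix.single_mul_single_of_ne _ _ _ _ ne14 _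
  have hDD : D * D = 0 := Matrix.single_mul_single_of_ne _ _ _ _ ne15 _
  have hDE : D * E = 0 := Matrix.single_mul_single_of_ne _ _ _ _ ne14 _
  have hEC : E * C = 0 := Matrix.single_mul_single_of_ne _ _ _ _ ne14 _
  have hED : E * D = 0 := Matrix.single_mul_single_of_ne _ _ _ _ ne15 _
  have hEE : E * E = 0 := Matrix.single_mul_single_of_ne _ _ _ _ ne14 _
  have hCD : C * D = E := by
    rw [hC, hD, Matrix.single_mul_single_same, one_mul, hE]
  have comm : Lb F n a b i j t * Sb F n c k u = Sb F n c k u * Lb F n a b i j t := by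
    rw [hL, hS]
    simp only [mul_add, add_mul, mul_sub, sub_mul, smul_mul_assoc, mul_smul_comm,
      hAC, hAD, hAE, hBC, hBD, hBE, hCA, hCB, hDA, hDB, hEA, hEB, smul_zero,
      one_mul, mul_one, sub_zero]
    module
  have hLL : Lb F n a b i j t * Lb F n a b i j (-t) = 1 := by
    rw [hL, hL]
    simp only [mul_add, add_mul, mul_sub, sub_mul, smul_mul_assoc, mul_smul_comm,
      hAA, hABz, hBA, hBB, smul_zero, one_mul, mul_one, mul_neg, sub_zero]
    module
  have hSS : Sb F n c k u * Sb F n c k (-u) = 1 := by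
    rw [hS, hS]
    simp only [mul_add, add_mul, mul_sub, sub_mul, smul_mul_assoc, mul_smul_comm,
      hCC, hCE, hDC, hDD, hDE, hEC, hED, hEE, hCD, smul_zero, one_mul, mul_one,
      mul_neg, neg_neg, smul_smul, smul_neg, sub_zero]
    have hc2 : (c : F) * (c : F) = 1 := by
      rcases hc with rfl | rfl <;> norm_num
    match_scalars <;> first
      | ring1
      | linear_combination (2 * u ^ 2) * hc2
  refine ⟨?_, comm⟩
  rw [comm, mul_assoc (Sb F n c k u), hLL, mul_one, hSS]
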